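/- arXiv:1702.00679 — 4 statements merged into one kernel-verified Lean document; each statement's English description precedes it below -/
import Mathlib

section
/- Let V be a valuation ring and a a nonzero element of its maximal ideal such that ⋂_{n≥0} aⁿV = 0 (V is a-adically separated). Then every nonzero prime ideal of V contains a; consequently, the localization V[1/a] of V away from a is a field, canonically isomorphic to the fraction field of V. -/
/-- Let `V` be a valuation ring and `a` a nonzero element of its maximal ideal such that
`⋂ₙ aⁿV = 0`.  Then every nonzero prime ideal of `V` contains `a`; consequently the
localization `V[1/a]` is a field, canonically isomorphic to the fraction field of `V`. -/
theorem localization_away_of_separated_valuation_ring_is_fraction_field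
    (V : Type) [CommRing V] [IsDomain V] [ValuationRing V]
    (a : V) (ha : a ≠ 0) (hma : a ∈ IsLocalRing.maximalIdeal V)
    (hsep : (⨅ k : ℕ, (Ideal.span {a ^ k} : Ideal V)) = ⊥) :
    (∀ p : Ideal V, p.IsPrime → p ≠ ⊥ → a ∈ p) ∧
    IsField (Localization.Away a) ∧
    IsFractionRing V (Localization.Away a) ∧
    Nonempty (Localization.Away a ≃+* FractionRing V) := by
  -- every nonzero element divides some power of a
  have key : ∀ x : V, x ≠ 0 → ∃ k : ℕ, x ∣ a ^ k := by
    intro x hx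
    by_contra h
    push_neg at h
    apply hx
    have : x ∈ (⨅ k : ℕ, (Ideal.span {a ^ k} : Ideal V)) := by
      rw [Ideal.mem_iInf]
      intro k
      rw [Ideal.mem_span_singleton]
      obtain ⟨c, hc | hc⟩ := ValuationRing.cond (a ^ k) x
      · exact ⟨c, hc.symm⟩
      · exact absurd ⟨c, hc.symm⟩ (h k)
    rwa [hsep, Ideal.mem_bot] at this
  have part1 : ∀ p : Ideal V, p.IsPrime → p ≠ ⊥ → a ∈ p := by
    intro p hp hp0
    obtain ⟨x, hxp, hx⟩ := Submodule.exists_mem_ne_zero_of_ne_bot hp0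
    obtain ⟨k, c, hc⟩ := key x hx
    have : a ^ k ∈ p := hc ▸ Ideal.mul_mem_right _ _ hxp
    exact hp.mem_of_pow_mem k this
  have hfr : IsFractionRing V (Localization.Away a) := by
    refine IsLocalization.of_le_of_exists_dvd (Submonoid.powers a) _ ?_ ?_
    · rintro x ⟨n, rfl⟩
      exact mem_nonZeroDivisors_of_ne_zero (pow_ne_zero n ha)
    · intro n hn
      obtain ⟨k, hk⟩ := key n (nonZeroDivisors.ne_zero hn)
      exact ⟨a ^ k, ⟨k, rfl⟩, hk⟩
  have hfield : IsField (Localization.Away a) :=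
    (IsFractionRing.toField (A := V) (K := Localization.Away a)).toIsField
  refine ⟨part1, hfield, hfr, ⟨?_⟩⟩
  exact (IsLocalization.algEquiv (nonZeroDivisors V) (Localization.Away a)
    (FractionRing V)).toRingEquiv
end

section
/- Let (R_i)_{i∈I} be a directed system of commutative rings over a directed index set, with all transition ring homomorphisms flat, and let R be the direct limit (filtered colimit) of this system. Let S be a commutative R-algebra such that, for every index i, S is flat as an R_i-module via the composite R_i → R → S. Then S is flat as an R-module. -/
open scoped TensorProduct


/-- Let `(Rᵢ)` be a directed system of commutative rings over a directed index set with flat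
transition homomorphisms, and let `R` be its direct limit (expressed via the cocone maps
`g i : Rᵢ →+* R`, which are jointly surjective and whose kernels are eventually realized in the
system).  Let `S` be a commutative `R`-algebra which is flat as an `Rᵢ`-module via the composite
`Rᵢ → R → S` for every `i`.  Then `S` is flat as an `R`-module. -/
theorem flat_over_directLimit_of_flat_over_components
    (ι : Type) [Preorder ι] [IsDirected ι (· ≤ ·)] [Nonempty ι]
    (R : ι → Type) [∀ i, CommRing (R i)]
    (f : ∀ i j, i ≤ j → (R i →+* R j))
    (hcomp : ∀ i j k (hij : i ≤ j) (hjk : j ≤ k),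
      (f j k hjk).comp (f i j hij) = f i k (le_trans hij hjk))
    (hflat : ∀ i j (h : i ≤ j), (f i j h).Flat)
    (L : Type) [CommRing L]
    (g : ∀ i, R i →+* L)
    (hg : ∀ i j (h : i ≤ j), (g j).comp (f i j h) = g i)
    (hsurj : ∀ x : L, ∃ i, ∃ y : R i, g i y = x)
    (hker : ∀ i (y : R i), g i y = 0 → ∃ j, ∃ h : i ≤ j, f i j h y = 0)
    (S : Type) [CommRing S] [Algebra L S]
    (hS : ∀ i, ((algebraMap L S).comp (g i)).Flat) :
    Module.Flat L S := by
  rw [Module.Flat.iff_lift_lsmul_comp_subtype_injective]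
  intro I _
  rw [injective_iff_map_eq_zero]
  intro z hz
  -- write z as a finite sum of simple tensors
  obtain ⟨t, rfl⟩ := TensorProduct.exists_finset z
  -- lift the first components to the directed system
  classical
  choose idx y hy using fun p : I × S => hsurj (p.1 : L)
  obtain ⟨i, hi⟩ := Finset.exists_le (t.image idx)
  set b : I × S → R i := fun p =>
    if h : idx p ≤ i then f (idx p) i h (y p) else 0 with hb
  have hgb : ∀ p ∈ t, g i (b p) = (p.1 : L) := by
    intro p hp
    have hle : idx p ≤ i := hi _ (Finset.mem_image_of_mem idx hp)
    simp only [hb, dif_pos hle]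
    have := congrArg (fun φ : R (idx p) →+* L => φ (y p)) (hg (idx p) i hle)
    simpa using this.trans (hy p)
  -- the ideal generated by the lifts
  set J : Ideal (R i) := Ideal.span ↑(t.image b) with hJ
  have hmemJ : ∀ p ∈ t, b p ∈ J := fun p hp =>
    Ideal.subset_span (Finset.mem_coe.mpr (Finset.mem_image_of_mem b hp))
  -- set up S as an (R i)-algebra
  letI : Algebra (R i) S := ((algebraMap L S).comp (g i)).toAlgebra
  haveI hSi : Module.Flat (R i) S := hS i
  have hsmul : ∀ (r : R i) (s : S), r • s = g i r • s := by
    intro r s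
    rw [Algebra.smul_def, Algebra.smul_def]
    rfl
  -- the element w in J ⊗ S
  set w : ↥J ⊗[R i] S := ∑ p ∈ t.attach,
    (⟨b p.1, hmemJ p.1 p.2⟩ : J) ⊗ₜ[R i] p.1.2 with hw
  -- the canonical map J ⊗ S → S kills w
  have hw0 : TensorProduct.lift ((LinearMap.lsmul (R i) S).comp J.subtype) w = 0 := by
    rw [hw, map_sum]
    have h1 : ∀ p ∈ t.attach,
        TensorProduct.lift ((LinearMap.lsmul (R i) S).comp J.subtype)
          ((⟨b p.1, hmemJ p.1 p.2⟩ : J) ⊗ₜ[R i] p.1.2) = ((p.1.1 : L) • p.1.2 : S) := by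
      intro p _
      simp only [TensorProduct.lift.tmul, LinearMap.comp_apply, Submodule.subtype_apply,
        LinearMap.lsmul_apply]
      rw [hsmul, hgb p.1 p.2]
    rw [Finset.sum_congr rfl h1,
      Finset.sum_attach t (fun p => ((p.1 : L) • p.2 : S))]
    have := hz
    rw [map_sum] at this
    simp only [TensorProduct.lift.tmul, LinearMap.comp_apply, Submodule.subtype_apply,
      LinearMap.lsmul_apply] at this
    exact this
  -- by flatness of S over R i, w = 0
  have hwz : w = 0 := by
    have hfg : J.FG := ⟨t.image b, rfl⟩
    exact (injective_iff_map_eq_zero _).mp (Module.Flat.iff_lift_lsmul_comp_subtype_injective.mp hSi hfg) w hw0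
  -- transport back: build a linear map ψ : J ⊗[R i] S → I ⊗[L] S with ψ w = z
  letI : Module (R i) (↥I ⊗[L] S) := Module.compHom _ (g i)
  have hJI : ∀ x : J, g i (x : R i) ∈ I := by
    intro x
    have hle : J.map (g i) ≤ I := by
      rw [hJ, Ideal.map_span, Ideal.span_le]
      rintro _ ⟨u, hu, rfl⟩
      obtain ⟨p, hp, rfl⟩ := Finset.mem_image.mp (Finset.mem_coe.mp hu)
      rw [hgb p hp]
      exact p.1.2
    exact hle (Ideal.mem_map_of_mem _ x.2)
  have hcsmul : ∀ (r : R i) (x : ↥I ⊗[L] S), r • x = g i r • x := fun _ _ => rfl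
  haveI : SMulCommClass (R i) (R i) (↥I ⊗[L] S) :=
    ⟨fun a b x => smul_comm (g i a) (g i b) x⟩
  set B : J →ₗ[R i] S →ₗ[R i] (↥I ⊗[L] S) := LinearMap.mk₂ (R i)
    (fun x s => (⟨g i (x : R i), hJI x⟩ : I) ⊗ₜ[L] s)
    (by
      intro x x' s
      have h2 : (⟨g i ((x + x' : J) : R i), hJI _⟩ : I)
          = ⟨g i (x : R i), hJI x⟩ + ⟨g i (x' : R i), hJI x'⟩ := Subtype.ext (by simp)
      rw [h2, TensorProduct.add_tmul])
    (by
      intro r x s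
      have h2 : (⟨g i ((r • x : J) : R i), hJI _⟩ : I)
          = g i r • (⟨g i (x : R i), hJI x⟩ : I) :=
        Subtype.ext (by simp [smul_eq_mul, map_mul])
      rw [h2, hcsmul, TensorProduct.smul_tmul'])
    (by
      intro x s s'
      rw [TensorProduct.tmul_add])
    (by
      intro r x s
      rw [hsmul r s, TensorProduct.tmul_smul]
      exact (hcsmul r _).symm)
  have hψ : TensorProduct.lift B w = ∑ p ∈ t, p.1 ⊗ₜ[L] p.2 := by
    rw [hw, map_sum]
    have h1 : ∀ p ∈ t.attach,
        TensorProduct.lift B ((⟨b p.1, hmemJ p.1 p.2⟩ : J) ⊗ₜ[R i] p.1.2)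
          = (p.1.1 ⊗ₜ[L] p.1.2 : ↥I ⊗[L] S) := by
      intro p _
      rw [TensorProduct.lift.tmul]
      simp only [B, LinearMap.mk₂_apply]
      congr 1
      exact Subtype.ext (hgb p.1 p.2)
    rw [Finset.sum_congr rfl h1,
      Finset.sum_attach t (fun p => (p.1 ⊗ₜ[L] p.2 : ↥I ⊗[L] S))]
  rw [← hψ, hwz, map_zero]
end

section
/- Let V be a valuation ring and a a nonzero element of its maximal ideal such that ⋂_{n≥0} aⁿV = 0. Then the a-adic completion V̂ = lim_{n} V/aⁿV of V (AdicCompletion (Ideal.span {a}) V) is faithfully flat as a V-module; in particular, the canonical ring homomorphism V → V̂ is a faithfully flat ring map. -/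
open TensorProduct

private lemma mem_smul_top_iff_dvd (V : Type) [CommRing V] (a : V) (n : ℕ) (y : V) :
    y ∈ (Ideal.span {a} ^ n • ⊤ : Submodule V V) ↔ a ^ n ∣ y := by
  rw [smul_eq_mul, Ideal.mul_top, Ideal.span_singleton_pow, Ideal.mem_span_singleton]

/-- `a ^ k` is regular on the `a`-adic completion of a domain. -/
private lemma pow_smul_eq_zero_adic (V : Type) [CommRing V] [IsDomain V] (a : V) (ha : a ≠ 0)
    (k : ℕ) (x : AdicCompletion (Ideal.span {a}) V) (h : a ^ k • x = 0) : x = 0 := by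
  ext n
  obtain ⟨y, hy⟩ := Submodule.Quotient.mk_surjective _ (x.val (n + k))
  have hxy : (a ^ k • x).val (n + k) = 0 := by rw [h]; rfl
  rw [AdicCompletion.val_smul_apply, ← hy, ← Submodule.Quotient.mk_smul,
    Submodule.Quotient.mk_eq_zero, mem_smul_top_iff_dvd, smul_eq_mul] at hxy
  obtain ⟨z, hz⟩ := hxy
  have hz' : a ^ k * y = a ^ k * (a ^ n * z) := by
    rw [hz, pow_add]; ring
  have hyz : y = a ^ n * z := mul_left_cancel₀ (pow_ne_zero k ha) hz'
  have := x.property (Nat.le_add_right n k)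
  rw [← hy, ← Submodule.mkQ_apply, Submodule.factor_mk, Submodule.mkQ_apply] at this
  rw [← this, AdicCompletion.val_zero_apply, Submodule.Quotient.mk_eq_zero,
    mem_smul_top_iff_dvd]
  exact ⟨z, hyz⟩

/-- Every nonzero scalar acts injectively on the `a`-adic completion. -/
private lemma smul_injective_adic (V : Type) [CommRing V] [IsDomain V] [ValuationRing V]
    (a : V) (ha : a ≠ 0)
    (hsep : (⨅ k : ℕ, (Ideal.span {a ^ k} : Ideal V)) = ⊥)
    (c : V) (hc : c ≠ 0) :
    Function.Injective (fun x : AdicCompletion (Ideal.span {a}) V => c • x) := by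
  -- find `k` with `¬ a ^ k ∣ c`
  obtain ⟨k, hk⟩ : ∃ k : ℕ, c ∉ Ideal.span ({a ^ k} : Set V) := by
    by_contra hcon
    push_neg at hcon
    have hmem : c ∈ (⨅ k : ℕ, (Ideal.span {a ^ k} : Ideal V)) := (Submodule.mem_iInf _).2 hcon
    rw [hsep] at hmem
    exact hc (by simpa using hmem)
  have hdvd : c ∣ a ^ k := by
    rcases ValuationRing.dvd_total (a ^ k) c with h | h
    · exact absurd (Ideal.mem_span_singleton.2 h) hk
    · exact h
  obtain ⟨d, hd⟩ := hdvd
  intro x y hxy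
  have h0 : c • (x - y) = 0 := by
    simp only [smul_sub]
    rw [show c • x = c • y from hxy, sub_self]
  have h1 : a ^ k • (x - y) = 0 := by
    rw [hd, mul_comm, mul_smul, h0, smul_zero]
  have := pow_smul_eq_zero_adic V a ha k (x - y) h1
  exact sub_eq_zero.1 this

/-- Let `V` be a valuation ring and `a` a nonzero element of its maximal ideal with
`⋂ₙ aⁿV = 0`.  Then the `a`-adic completion `V̂ = lim V/aⁿV` of `V` is faithfully flat as a
`V`-module; in particular the canonical ring homomorphism `V → V̂` (the algebra map) is
faithfully flat. -/
theorem adicCompletion_of_separated_valuation_ring_faithfully_flat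
    (V : Type) [CommRing V] [IsDomain V] [ValuationRing V]
    (a : V) (ha : a ≠ 0) (hma : a ∈ IsLocalRing.maximalIdeal V)
    (hsep : (⨅ k : ℕ, (Ideal.span {a ^ k} : Ideal V)) = ⊥) :
    Module.FaithfullyFlat V (AdicCompletion (Ideal.span {a}) V) := by
  set I : Ideal V := Ideal.span {a} with hI
  set M : Type := AdicCompletion I V with hMdef
  have hreg : ∀ (c : V), c ≠ 0 → Function.Injective (fun x : M => c • x) :=
    smul_injective_adic V a ha hsep
  have flat : Module.Flat V M := by
    rw [Module.Flat.iff_lift_lsmul_comp_subtype_injective]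
    intro J hJ
    have hP : J.IsPrincipal := IsBezout.isPrincipal_of_FG J hJ
    obtain ⟨c, hc⟩ := hP.1
    subst hc
    by_cases hc0 : c = 0
    · subst hc0
      have hbot : (Submodule.span V ({0} : Set V)) = ⊥ := by simp
      rw [hbot]
      intro u v _
      exact Subsingleton.elim u v
    · set e : V ≃ₗ[V] ↥(Submodule.span V {c}) :=
        LinearEquiv.toSpanNonzeroSingleton V V c hc0 with he
      set E : M ≃ₗ[V] (↥(Submodule.span V ({c} : Set V)) ⊗[V] M) :=
        (TensorProduct.lid V M).symm ≪≫ₗ TensorProduct.congr e (LinearEquiv.refl V M) with hE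
      have key : ∀ m : M,
          TensorProduct.lift ((LinearMap.lsmul V M).comp (Submodule.span V {c}).subtype) (E m)
            = c • m := by
        intro m
        simp [hE, he, TensorProduct.congr, LinearEquiv.toSpanNonzeroSingleton]
      intro u v huv
      have hu :
          TensorProduct.lift ((LinearMap.lsmul V M).comp (Submodule.span V {c}).subtype)
            (E (E.symm u)) = c • E.symm u := key _
      have hv :
          TensorProduct.lift ((LinearMap.lsmul V M).comp (Submodule.span V {c}).subtype)
            (E (E.symm v)) = c • E.symm v := key _
      rw [E.apply_symm_apply] at hu hv
      have : c • E.symm u = c • E.symm v := by rw [← hu, ← hv, huv]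
      have := hreg c hc0 this
      exact E.symm.injective this
  refine { toFlat := flat, submodule_ne_top := ?_ }
  intro m hm heq
  have ham : a ∈ m := by
    rwa [IsLocalRing.eq_maximalIdeal hm]
  -- push the equality down to `V ⧸ (I ^ 1 • ⊤)`
  have h1 : Submodule.map (AdicCompletion.eval I V 1) (m • (⊤ : Submodule V M)) = ⊤ := by
    rw [heq, Submodule.map_top, AdicCompletion.range_eval]
  rw [Submodule.map_smul'', Submodule.map_top, AdicCompletion.range_eval] at h1
  have h2 : m • (⊤ : Submodule V (V ⧸ (I ^ 1 • ⊤ : Submodule V V)))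
      = Submodule.map (Submodule.mkQ _) (m • (⊤ : Submodule V V)) := by
    rw [Submodule.map_smul'', Submodule.map_top, Submodule.range_mkQ]
  rw [h2] at h1
  have hmem : (Submodule.mkQ (I ^ 1 • ⊤ : Submodule V V)) 1 ∈
      Submodule.map (Submodule.mkQ _) (m • (⊤ : Submodule V V)) := by
    rw [h1]; trivial
  obtain ⟨y, hy, hxy⟩ := hmem
  have hy' : y ∈ m := by
    have : m • (⊤ : Submodule V V) = m := by rw [smul_eq_mul, Ideal.mul_top]
    rwa [this] at hy
  have hsub : y - 1 ∈ (I ^ 1 • ⊤ : Submodule V V) := by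
    rwa [Submodule.mkQ_apply, Submodule.mkQ_apply, Submodule.Quotient.eq] at hxy
  have hsub' : y - 1 ∈ m := by
    rw [mem_smul_top_iff_dvd, pow_one] at hsub
    obtain ⟨t, ht⟩ := hsub
    rw [ht]
    exact Ideal.mul_mem_right t m ham
  have hone : (1 : V) ∈ m := by
    have : (1 : V) = y - (y - 1) := by ring
    rw [this]
    exact Submodule.sub_mem m hy' hsub'
  exact hm.ne_top (Ideal.eq_top_of_isUnit_mem m hone isUnit_one)
end

section
/- Let A be a commutative ring and a ∈ A an element such that: the pair (A, aA) is henselian (HenselianRing A (Ideal.span {a})); the localization A[1/a] is Noetherian; and for every finitely generated A-module the a-power-torsion submodule is finitely generated (i.e., A is a-adically adhesive and a-adically henselian). Then: (i) every finitely generated A-module M is a-adically separated, i.e., ⋂_{n≥0} aⁿM = 0; and (ii) every A-submodule N of a finitely generated A-module M is a-adically closed in M, i.e., N = ⋂_{n≥0} (N + aⁿM). -/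
/-- The `a`-power-torsion submodule `{m ∈ M : ∃ k ≥ 0, aᵏ • m = 0}` of an `A`-module `M`. -/
def aPowerTorsion {A : Type*} [CommRing A] (a : A) (M : Type*) [AddCommGroup M]
    [Module A M] : Submodule A M where
  carrier := {m : M | ∃ k : ℕ, a ^ k • m = 0}
  zero_mem' := ⟨0, smul_zero _⟩
  add_mem' := by
    rintro x y ⟨k, hk⟩ ⟨l, hl⟩
    refine ⟨k + l, ?_⟩
    have hx : a ^ (k + l) • x = 0 := by
      rw [add_comm, pow_add, mul_smul, hk, smul_zero]
    have hy : a ^ (k + l) • y = 0 := by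
      rw [pow_add, mul_smul, hl, smul_zero]
    rw [smul_add, hx, hy, add_zero]
  smul_mem' := by
    rintro c x ⟨k, hk⟩
    exact ⟨k, by rw [smul_comm, hk, smul_zero]⟩

lemma mem_aPowerTorsion {A : Type*} [CommRing A] {a : A} {M : Type*} [AddCommGroup M]
    [Module A M] {m : M} : m ∈ aPowerTorsion a M ↔ ∃ k : ℕ, a ^ k • m = 0 := Iff.rfl

lemma aPowerTorsion_bounded {A : Type*} [CommRing A] (a : A) (M : Type*) [AddCommGroup M]
    [Module A M] (h : (aPowerTorsion a M).FG) :
    ∃ c : ℕ, ∀ m ∈ aPowerTorsion a M, a ^ c • m = 0 := by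
  classical
  obtain ⟨S, hS⟩ := h
  have hmem : ∀ s ∈ S, ∃ k : ℕ, a ^ k • s = 0 := fun s hs =>
    mem_aPowerTorsion.mp (hS ▸ Submodule.subset_span hs)
  choose k hk using hmem
  refine ⟨S.attach.sup fun s => k s.1 s.2, fun m hm => ?_⟩
  set c := S.attach.sup fun s => k s.1 s.2 with hc
  have : aPowerTorsion a M ≤ LinearMap.ker (a ^ c • (LinearMap.id : M →ₗ[A] M)) := by
    rw [← hS, Submodule.span_le]
    intro s hs
    have hle : k s hs ≤ c := Finset.le_sup (f := fun s => k s.1 s.2) (Finset.mem_attach S ⟨s, hs⟩)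
    simp only [SetLike.mem_coe, LinearMap.mem_ker, LinearMap.smul_apply, LinearMap.id_apply]
    calc a ^ c • s = a ^ (c - k s hs) • (a ^ (k s hs) • s) := by
          rw [← mul_smul, ← pow_add, Nat.sub_add_cancel hle]
      _ = 0 := by rw [hk s hs, smul_zero]
  simpa using this hm

/-- Separatedness for finitely generated `a`-power-torsion-free modules. -/
lemma sep_torsionFree (A : Type) [CommRing A] (a : A)
    (hjac : Ideal.span {a} ≤ Ideal.jacobson ⊥)
    (hnoeth : IsNoetherianRing (Localization.Away a))
    (htor : ∀ (M : Type) [AddCommGroup M] [Module A M] [Module.Finite A M],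
      (aPowerTorsion a M).FG)
    (M : Type) [AddCommGroup M] [Module A M] [Module.Finite A M]
    (htf : ∀ m : M, (∃ k : ℕ, a ^ k • m = 0) → m = 0)
    (x : M) (hx : ∀ k : ℕ, ∃ y : M, x = a ^ k • y) : x = 0 := by
  classical
  set p := Submonoid.powers a with hp
  set f := LocalizedModule.mkLinearMap p M with hf
  set R := Localization.Away a with hR
  -- the submodule of infinitely `a`-divisible elements
  set N : Submodule A M :=
    { carrier := {m : M | ∀ k : ℕ, ∃ y : M, m = a ^ k • y}
      zero_mem' := fun k => ⟨0, (smul_zero _).symm⟩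
      add_mem' := by
        rintro m m' hm hm' k
        obtain ⟨y, hy⟩ := hm k
        obtain ⟨y', hy'⟩ := hm' k
        exact ⟨y + y', by rw [hy, hy', smul_add]⟩
      smul_mem' := by
        rintro c m hm k
        obtain ⟨y, hy⟩ := hm k
        exact ⟨c • y, by rw [hy, smul_comm]⟩ } with hN
  have hxN : x ∈ N := hx
  have hdiv : ∀ m ∈ N, ∃ z ∈ N, m = a • z := by
    intro m hm
    obtain ⟨z, hz⟩ := hm 1
    rw [pow_one] at hz
    refine ⟨z, fun k => ?_, hz⟩
    obtain ⟨y, hy⟩ := hm (k + 1)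
    refine ⟨y, ?_⟩
    have h1 : a • (z - a ^ k • y) = 0 := by
      rw [smul_sub, ← hz, hy, pow_succ, mul_comm, mul_smul, sub_self]
    have := htf (z - a ^ k • y) ⟨1, by rw [pow_one]; exact h1⟩
    rwa [sub_eq_zero] at this
  have hdivk : ∀ m ∈ N, ∀ k : ℕ, ∃ z ∈ N, m = a ^ k • z := by
    intro m hm k
    induction k with
    | zero => exact ⟨m, hm, by rw [pow_zero, one_smul]⟩
    | succ k ih =>
      obtain ⟨z, hz, he⟩ := ih
      obtain ⟨w, hw, he2⟩ := hdiv z hz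
      exact ⟨w, hw, by rw [he, he2, pow_succ, mul_smul]⟩
  -- localization
  haveI : Module.Finite R (LocalizedModule p M) := Module.Finite.of_isLocalizedModule p f
  set L : Submodule R (LocalizedModule p M) := Submodule.span R (f '' N) with hL
  obtain ⟨S, hS⟩ := IsNoetherian.noetherian L
  have hsub : ∀ s ∈ S, ∃ F : Finset (LocalizedModule p M),
      ↑F ⊆ f '' ↑N ∧ s ∈ Submodule.span R (F : Set (LocalizedModule p M)) := by
    intro s hs
    have : s ∈ L := hS ▸ Submodule.subset_span hs
    exact Submodule.mem_span_finite_of_mem_span this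
  choose F hF1 hF2 using hsub
  set F' : Finset (LocalizedModule p M) := S.attach.biUnion (fun s => F s.1 s.2) with hF'
  have hF'sub : (F' : Set (LocalizedModule p M)) ⊆ f '' ↑N := by
    intro y hy
    simp only [hF', Finset.coe_biUnion, Set.mem_iUnion, Finset.mem_coe] at hy
    obtain ⟨s, _, hy⟩ := hy
    exact hF1 s.1 s.2 hy
  have hLF' : L = Submodule.span R (F' : Set (LocalizedModule p M)) := by
    apply le_antisymm
    · rw [← hS, Submodule.span_le]
      intro s hs
      refine Submodule.span_mono ?_ (hF2 s hs)
      intro y hy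
      simp only [hF', Finset.coe_biUnion, Set.mem_iUnion, Finset.mem_coe]
      exact ⟨⟨s, hs⟩, Finset.mem_attach _ _, hy⟩
    · rw [Submodule.span_le]
      exact hF'sub.trans Submodule.subset_span
  -- choose preimages in N
  have hpre : ∀ y ∈ F', ∃ m, m ∈ N ∧ f m = y := by
    intro y hy
    obtain ⟨m, hm, hfm⟩ := hF'sub hy
    exact ⟨m, hm, hfm⟩
  choose g hg1 hg2 using hpre
  set G : Set M := Set.range (fun y : {y // y ∈ F'} => g y.1 y.2) with hG
  have hGfin : G.Finite := Set.finite_range _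
  have hGN : G ⊆ ↑N := by rintro _ ⟨y, rfl⟩; exact hg1 y.1 y.2
  have hfG : f '' G = (F' : Set (LocalizedModule p M)) := by
    ext y
    constructor
    · rintro ⟨_, ⟨w, rfl⟩, rfl⟩
      rw [hg2 w.1 w.2]; exact w.2
    · intro hy
      exact ⟨g y hy, ⟨⟨y, hy⟩, rfl⟩, hg2 y hy⟩
  set N₀ : Submodule A M := Submodule.span A G with hN₀
  have hN₀N : N₀ ≤ N := Submodule.span_le.mpr hGN
  have hloc : N₀.localized' R p f = L := by
    rw [hN₀, Submodule.localized'_span, hfG, hLF']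
  have hpow : ∀ n ∈ N, ∃ s : ℕ, a ^ s • n ∈ N₀ := by
    intro n hn
    have h1 : f n ∈ L := Submodule.subset_span (Set.mem_image_of_mem f hn)
    rw [← hloc, Submodule.mem_localized'] at h1
    obtain ⟨m, hm, s, hms⟩ := h1
    rw [IsLocalizedModule.mk'_eq_iff] at hms
    have h2 : f m = f ((s : A) • n) := by
      rw [map_smul, hms, Submonoid.smul_def]
    have h0 : f ((s : A) • n - m) = 0 := by rw [map_sub, h2, sub_self]
    obtain ⟨t, ht⟩ := (IsLocalizedModule.eq_zero_iff p f).mp h0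
    obtain ⟨u, hu⟩ := t.2
    obtain ⟨v, hv⟩ := s.2
    have hu' : a ^ u = (t : A) := hu
    have hv' : a ^ v = (s : A) := hv
    have h3 : (s : A) • n - m = 0 := by
      refine htf _ ⟨u, ?_⟩
      rw [hu']
      rw [Submonoid.smul_def] at ht
      exact ht
    rw [sub_eq_zero] at h3
    exact ⟨v, by rw [hv', h3]; exact hm⟩
  obtain ⟨c', hc'⟩ := aPowerTorsion_bounded a (M ⧸ N₀) (htor _)
  have hNN₀ : ∀ n ∈ N, a ^ c' • n ∈ N₀ := by
    intro n hn
    obtain ⟨s, hs⟩ := hpow n hn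
    have hmem : (Submodule.Quotient.mk n : M ⧸ N₀) ∈ aPowerTorsion a (M ⧸ N₀) :=
      ⟨s, by rw [← Submodule.Quotient.mk_smul, Submodule.Quotient.mk_eq_zero]; exact hs⟩
    have := hc' _ hmem
    rwa [← Submodule.Quotient.mk_smul, Submodule.Quotient.mk_eq_zero] at this
  have hNle : N ≤ N₀ := by
    intro n hn
    obtain ⟨z, hz, he⟩ := hdivk n hn c'
    rw [he]
    exact hNN₀ z hz
  have hNfg : N.FG := by
    have : N = N₀ := le_antisymm hNle hN₀N
    rw [this]
    exact Submodule.fg_def.mpr ⟨G, hGfin, rfl⟩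
  have hle2 : N ≤ Ideal.span {a} • N := by
    intro n hn
    obtain ⟨z, hz, he⟩ := hdiv n hn
    rw [he]
    exact Submodule.smul_mem_smul (Ideal.mem_span_singleton_self a) hz
  have hbot : N = ⊥ := Submodule.eq_bot_of_le_smul_of_le_jacobson_bot _ N hNfg hle2 hjac
  exact (Submodule.mem_bot A).mp (hbot ▸ hxN)

/-- Separatedness for all finitely generated modules. -/
lemma sep_general (A : Type) [CommRing A] (a : A)
    (hjac : Ideal.span {a} ≤ Ideal.jacobson ⊥)
    (hnoeth : IsNoetherianRing (Localization.Away a))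
    (htor : ∀ (M : Type) [AddCommGroup M] [Module A M] [Module.Finite A M],
      (aPowerTorsion a M).FG)
    (M : Type) [AddCommGroup M] [Module A M] [Module.Finite A M]
    (x : M) (hx : ∀ k : ℕ, ∃ y : M, x = a ^ k • y) : x = 0 := by
  set T := aPowerTorsion a M with hT
  obtain ⟨c, hc⟩ := aPowerTorsion_bounded a M (htor M)
  have htf : ∀ m : M ⧸ T, (∃ k : ℕ, a ^ k • m = 0) → m = 0 := by
    intro m hm
    obtain ⟨y, rfl⟩ := Submodule.Quotient.mk_surjective T m
    obtain ⟨k, hk⟩ := hm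
    rw [← Submodule.Quotient.mk_smul, Submodule.Quotient.mk_eq_zero] at hk
    obtain ⟨l, hl⟩ := hk
    rw [Submodule.Quotient.mk_eq_zero]
    exact ⟨l + k, by rw [pow_add, mul_smul]; exact hl⟩
  have hx' : ∀ k : ℕ, ∃ y : M ⧸ T, (Submodule.Quotient.mk x : M ⧸ T) = a ^ k • y := by
    intro k
    obtain ⟨y, hy⟩ := hx k
    exact ⟨Submodule.Quotient.mk y, by rw [hy, Submodule.Quotient.mk_smul]⟩
  have hxT : x ∈ T := by
    rw [← Submodule.Quotient.mk_eq_zero]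
    exact sep_torsionFree A a hjac hnoeth htor (M ⧸ T) htf _ hx'
  obtain ⟨y, hy⟩ := hx (c + c)
  have hz : (a ^ c • y) ∈ T := by
    refine ⟨c + c, ?_⟩
    calc a ^ (c + c) • a ^ c • y = a ^ c • (a ^ (c + c) • y) := by
          rw [← mul_smul, ← mul_smul, mul_comm]
      _ = a ^ c • x := by rw [← hy]
      _ = 0 := hc x hxT
  calc x = a ^ (c + c) • y := hy
    _ = a ^ c • (a ^ c • y) := by rw [pow_add, mul_smul]
    _ = 0 := hc _ hz

/-- Let `A` be a commutative ring and `a ∈ A` such that `(A, aA)` is a henselian pair, `A[1/a]`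
is Noetherian, and the `a`-power-torsion of every finitely generated `A`-module is finitely
generated (i.e. `A` is `a`-adically adhesive and `a`-adically henselian).  Then (i) every
finitely generated `A`-module `M` is `a`-adically separated (`⋂ₙ aⁿM = 0`), and (ii) every
submodule `N` of a finitely generated `A`-module `M` is `a`-adically closed in `M`
(`N = ⋂ₙ (N + aⁿM)`). -/
theorem adhesive_henselian_separatedness_and_closedness
    (A : Type) [CommRing A] (a : A)
    (hhens : HenselianRing A (Ideal.span {a}))
    (hnoeth : IsNoetherianRing (Localization.Away a))
    (htor : ∀ (M : Type) [AddCommGroup M] [Module A M] [Module.Finite A M],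
      (aPowerTorsion a M).FG) :
    (∀ (M : Type) [AddCommGroup M] [Module A M] [Module.Finite A M] (x : M),
      (∀ k : ℕ, ∃ y : M, x = a ^ k • y) → x = 0) ∧
    (∀ (M : Type) [AddCommGroup M] [Module A M] [Module.Finite A M]
      (N : Submodule A M) (x : M),
      (∀ k : ℕ, ∃ z ∈ N, ∃ y : M, x = z + a ^ k • y) → x ∈ N) := by
  have hjac : Ideal.span {a} ≤ Ideal.jacobson ⊥ := hhens.jac
  refine ⟨fun M _ _ _ x hx => sep_general A a hjac hnoeth htor M x hx, ?_⟩
  intro M _ _ _ N x hx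
  rw [← Submodule.Quotient.mk_eq_zero]
  refine sep_general A a hjac hnoeth htor (M ⧸ N) _ (fun k => ?_)
  obtain ⟨z, hz, y, hy⟩ := hx k
  refine ⟨Submodule.Quotient.mk y, ?_⟩
  rw [hy, ← Submodule.Quotient.mk_smul]
  rw [Submodule.Quotient.mk_add]
  rw [(Submodule.Quotient.mk_eq_zero N).mpr hz, zero_add]
end
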